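/- Let R be a commutative domain in which every nonzero principal ideal has only finitely many minimal prime ideals. Then R is fractionally regular: for every nonzero nonunit a ∈ R, the classical quotient ring Q_cl(R/rad(aR)) is von Neumann regular. -/

import Mathlib

/-- Auxiliary: a reduced commutative ring with finitely many minimal primes has
von Neumann regular total quotient ring. -/
theorem aux_vnr_fraction {S : Type*} [CommRing S] [IsReduced S]
    (hfin : (minimalPrimes S).Finite) :
    ∀ x : FractionRing S, ∃ y, x * y * x = x := by
  classical
  -- every element in all minimal primes is zero
  have hzero : ∀ z : S, (∀ p ∈ minimalPrimes S, z ∈ p) → z = 0 := by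
    intro z hz
    have h1 : z ∈ sInf ((⊥ : Ideal S).minimalPrimes) := Ideal.mem_sInf.mpr fun {p} hp => hz p hp
    rw [Ideal.sInf_minimalPrimes] at h1
    have h2 : z ∈ nilradical S := h1
    rw [nilradical_eq_zero] at h2
    simpa using h2
  -- elements outside all minimal primes are nonzerodivisors
  have hnzd : ∀ t : S, (∀ p ∈ minimalPrimes S, t ∉ p) → t ∈ nonZeroDivisors S := by
    intro t ht
    rw [mem_nonZeroDivisors_iff_right]
    intro z hz
    refine hzero z fun p hp => ?_
    have hprime : p.IsPrime := hp.1.1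
    have hm : z * t ∈ p := by rw [hz]; exact p.zero_mem
    rcases hprime.mem_or_mem hm with h | h
    · exact h
    · exact absurd h (ht p hp)
  -- the key claim
  have key : ∀ r : S, ∃ j : S, r * j = 0 ∧ (r + j) ∈ nonZeroDivisors S := by
    intro r
    set A : Set (Ideal S) := {p ∈ minimalPrimes S | r ∈ p} with hA
    set B : Set (Ideal S) := {p ∈ minimalPrimes S | r ∉ p} with hB
    have hAfin : A.Finite := hfin.subset fun p hp => hp.1
    have hBfin : B.Finite := hfin.subset fun p hp => hp.1
    set J : Ideal S := hBfin.toFinset.inf id with hJ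
    -- J is not contained in any p ∈ A
    have hJA : ∀ p ∈ A, ¬ J ≤ p := by
      intro p hp hle
      have hprime : p.IsPrime := hp.1.1.1
      obtain ⟨q, hq, hqle⟩ := (Ideal.IsPrime.inf_le' hprime).mp hle
      have hqB : q ∈ B := hBfin.mem_toFinset.mp hq
      have hpq : p ≤ q := hp.1.2 ⟨hqB.1.1.1, bot_le⟩ hqle
      exact hqB.2 (hpq hp.2)
    -- prime avoidance: find j ∈ J outside all p ∈ A
    have havoid : ∃ j ∈ J, ∀ p ∈ A, j ∉ p := by
      have hiff := Ideal.subset_union_prime (f := fun p : Ideal S => p)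
        (s := hAfin.toFinset) ⊥ ⊥
        (fun p hp _ _ => (hAfin.mem_toFinset.mp hp).1.1.1) (I := J)
      have hsub : ¬ ((J : Set S) ⊆ ⋃ p ∈ (↑hAfin.toFinset : Set (Ideal S)), (p : Set S)) := by
        rw [hiff]
        rintro ⟨p, hp, hle⟩
        exact hJA p (hAfin.mem_toFinset.mp hp) hle
      rw [Set.not_subset] at hsub
      obtain ⟨j, hjJ, hj⟩ := hsub
      refine ⟨j, hjJ, fun p hp hjp => hj ?_⟩
      exact Set.mem_biUnion (by exact_mod_cast hAfin.mem_toFinset.mpr hp) hjp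
    obtain ⟨j, hjJ, hjA⟩ := havoid
    have hjB : ∀ p ∈ B, j ∈ p := fun p hp =>
      (Finset.inf_le (hBfin.mem_toFinset.mpr hp) : J ≤ p) hjJ
    refine ⟨j, ?_, ?_⟩
    · refine hzero _ fun p hp => ?_
      by_cases hr : r ∈ p
      · exact p.mul_mem_right _ hr
      · exact p.mul_mem_left _ (hjB p ⟨hp, hr⟩)
    · refine hnzd _ fun p hp hmem => ?_
      by_cases hr : r ∈ p
      · exact hjA p ⟨hp, hr⟩ (by simpa using p.sub_mem hmem hr)
      · exact hr (by simpa using p.sub_mem hmem (hjB p ⟨hp, hr⟩))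
  -- the fraction ring computation
  intro x
  obtain ⟨⟨r, s⟩, rfl⟩ := IsLocalization.mk'_surjective (nonZeroDivisors S) x
  obtain ⟨j, hj0, hjnzd⟩ := key r
  set K := FractionRing S
  set f : S →+* K := algebraMap S K with hf
  have hu : IsUnit (f (r + j)) := IsLocalization.map_units K ⟨r + j, hjnzd⟩
  have hus : IsUnit (f (s : S)) := IsLocalization.map_units K s
  refine ⟨f s * ↑hu.unit⁻¹, ?_⟩
  have hspec : IsLocalization.mk' K r s * f s = f r := IsLocalization.mk'_spec K r s
  apply hus.mul_left_cancel
  have hone : f (r + j) * ↑hu.unit⁻¹ = 1 := hu.mul_val_inv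
  have hrr : f r * ↑hu.unit⁻¹ * f r = f r := by
    have h2 : f r * f (r + j) = f r * f r := by
      rw [← map_mul, ← map_mul, mul_add, hj0, add_zero]
    calc f r * ↑hu.unit⁻¹ * f r = f r * f r * ↑hu.unit⁻¹ := by ring
      _ = f r * f (r + j) * ↑hu.unit⁻¹ := by rw [h2]
      _ = f r * (f (r + j) * ↑hu.unit⁻¹) := by ring
      _ = f r := by rw [hone, mul_one]
  calc f s * (IsLocalization.mk' K r s * (f s * ↑hu.unit⁻¹) * IsLocalization.mk' K r s)
      = (IsLocalization.mk' K r s * f s) * ↑hu.unit⁻¹ * (IsLocalization.mk' K r s * f s) := by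
        ring
    _ = f r * ↑hu.unit⁻¹ * f r := by rw [hspec]
    _ = f r := hrr
    _ = IsLocalization.mk' K r s * f s := hspec.symm
    _ = f s * IsLocalization.mk' K r s := mul_comm _ _

/-- A commutative domain in which every nonzero principal ideal has
finitely many minimal primes is fractionally regular. -/
theorem fractionally_regular_of_finitely_many_minimal_primes (R : Type*) [CommRing R]
    [IsDomain R]
    (h : ∀ a : R, a ≠ 0 → (Ideal.span {a} : Ideal R).minimalPrimes.Finite) :
    ∀ a : R, a ≠ 0 → ¬ IsUnit a →
      ∀ x : FractionRing (R ⧸ (Ideal.span {a} : Ideal R).radical),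
        ∃ y, x * y * x = x := by
  intro a ha _hna
  set I : Ideal R := Ideal.span {a}
  haveI : IsReduced (R ⧸ I.radical) :=
    (Ideal.isRadical_iff_quotient_reduced _).mp I.radical_isRadical
  apply aux_vnr_fraction
  have h1 : I.radical.minimalPrimes = Ideal.comap (Ideal.Quotient.mk I.radical) ''
      minimalPrimes (R ⧸ I.radical) := Ideal.minimalPrimes_eq_comap
  have h2 : I.radical.minimalPrimes.Finite := by
    rw [Ideal.radical_minimalPrimes]; exact h a ha
  rw [h1] at h2
  refine h2.of_finite_image ?_
  intro p _hp q _hq hpq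
  have hs := Ideal.Quotient.mk_surjective (I := I.radical)
  rw [← Ideal.map_comap_of_surjective _ hs p, ← Ideal.map_comap_of_surjective _ hs q, hpq]
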